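/- Let n, t be positive integers and r a real with r ≥ 30·t·n·log n. Given the complex Gaussian state |φ_c⟩ = Σ_{x∈ℤ} ρ_r(x) e^{-πix²/t} |x+c⟩ with unknown integer center c, measuring the residue mod t of the position register in the basis {|ψ_d⟩ = Σ_{x∈ℤ_t} e^{-πi(x-d)²/t}|x⟩}_{d∈ℤ_t} yields the outcome d = c mod t with probability at least 1 - 8π t log n / r - negl(n) ≥ 1 - 1/n. -/

import Mathlib

open Real

/-- The Gaussian function of width `s`: `ρ_s(x) = exp(-π x²/s²)`. -/
noncomputable def rhoG (s x : ℝ) : ℝ := Real.exp (-π * x ^ 2 / s ^ 2)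

section Stmt6Aux

lemma rhoG_def (s x : ℝ) : rhoG s x = Real.exp (-π * x ^ 2 / s ^ 2) := rfl

lemma summable_grid {C : ℝ} (hC : 0 < C) {T : ℝ} (hT : 0 < T) (α : ℝ) :
    Summable (fun k : ℤ => Real.exp (-C * (α + k * T) ^ 2)) := by
  have h := HurwitzKernelBounds.summable_f_int 0 (α / T) (t := C * T ^ 2 / π) (by positivity)
  refine h.congr fun k => ?_
  rw [HurwitzKernelBounds.f_int, pow_zero, one_mul]
  congr 1
  have hT' : T ≠ 0 := ne_of_gt hT
  have hπ : (π:ℝ) ≠ 0 := ne_of_gt pi_pos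
  field_simp
  ring

lemma gauss_min_le {C : ℝ} (hC : 0 < C) {p q x : ℝ} (hpx : p ≤ x) (hxq : x ≤ q) :
    min (Real.exp (-C * p ^ 2)) (Real.exp (-C * q ^ 2)) ≤ Real.exp (-C * x ^ 2) := by
  rcases le_or_gt 0 x with h | h
  · refine min_le_of_right_le (exp_le_exp.mpr ?_)
    nlinarith [mul_nonneg hC.le (mul_nonneg (sub_nonneg.2 hxq) (by linarith : (0:ℝ) ≤ q + x))]
  · refine min_le_of_left_le (exp_le_exp.mpr ?_)
    nlinarith [mul_nonneg hC.le (mul_nonneg (sub_nonneg.2 hpx) (by linarith : (0:ℝ) ≤ -x - p))]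

lemma tsum_min_ge (c : ℤ → ℝ) (hc : Summable c) (hc1 : Summable fun j : ℤ => c (j + 1))
    (hpos : ∀ j, 0 ≤ c j) (hle1 : ∀ j, c j ≤ 1) (j₀ : ℤ)
    (hdec : ∀ j, j₀ ≤ j → c (j + 1) ≤ c j)
    (hinc : ∀ j, j ≤ j₀ - 2 → c j ≤ c (j + 1)) :
    (∑' j : ℤ, c j) ≤ 2 + ∑' j : ℤ, min (c j) (c (j + 1)) := by
  set m : ℤ → ℝ := fun j => min (c j) (c (j + 1)) with hm_def
  have hm_nonneg : ∀ j, 0 ≤ m j := fun j => le_min (hpos j) (hpos (j + 1))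
  have hm_le : ∀ j, m j ≤ c j := fun j => min_le_left _ _
  have hm : Summable m := Summable.of_nonneg_of_le hm_nonneg hm_le hc
  set e : ℤ → ℝ := fun j => c j - m j with he_def
  have he_nonneg : ∀ j, 0 ≤ e j := fun j => sub_nonneg.2 (hm_le j)
  have he : Summable e := hc.sub hm
  have hcm : (∑' j : ℤ, c j) = (∑' j : ℤ, m j) + ∑' j : ℤ, e j := by
    rw [← Summable.tsum_add hm he]
    exact tsum_congr fun j => by simp [he_def]
  have hzero : ∀ j : ℤ, j ≤ j₀ - 2 → e j = 0 := by
    intro j hj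
    simp only [he_def, hm_def, min_eq_left (hinc j hj), sub_self]
  have heN : Summable (fun i : ℕ => e (j₀ - 1 + i)) :=
    he.comp_injective (fun a b hab => by simpa using hab)
  have hreindex : (∑' j : ℤ, e j) = ∑' i : ℕ, e (j₀ - 1 + i) := by
    symm
    apply Function.Injective.tsum_eq (g := fun i : ℕ => j₀ - 1 + (i : ℤ))
      (fun a b hab => by simpa using hab)
    rw [Function.support_subset_iff']
    intro x hx
    apply hzero
    by_contra hcon
    push_neg at hcon
    exact hx ⟨(x - (j₀ - 1)).toNat, by simp; omega⟩
  have hg : Summable (fun i : ℕ => c (j₀ + i)) :=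
    hc.comp_injective (fun a b hab => by simpa using hab)
  have hg1 : Summable (fun i : ℕ => c (j₀ + i + 1)) := by
    exact hc1.comp_injective (i := fun i : ℕ => j₀ + (i : ℤ)) (fun a b hab => by simpa using hab)
  have hgsplit : (∑' i : ℕ, c (j₀ + i)) = c j₀ + ∑' i : ℕ, c (j₀ + i + 1) := by
    rw [Summable.tsum_eq_zero_add hg]
    congr 1
    · norm_num
    · exact tsum_congr fun i => by congr 1; push_cast; ring
  have htel : (∑' i : ℕ, (c (j₀ + i) - c (j₀ + i + 1))) = c j₀ := by
    rw [Summable.tsum_sub hg hg1, hgsplit]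
    ring
  have hesplit : (∑' i : ℕ, e (j₀ - 1 + i)) = e (j₀ - 1) + ∑' i : ℕ, e (j₀ + i) := by
    rw [Summable.tsum_eq_zero_add heN]
    congr 1
    · norm_num
    · exact tsum_congr fun i => by congr 1; push_cast; ring
  have heval : ∀ i : ℕ, e (j₀ + i) = c (j₀ + i) - c (j₀ + i + 1) := by
    intro i
    have : m (j₀ + i) = c (j₀ + i + 1) := min_eq_right (hdec _ (by omega))
    simp only [he_def, this]
  have he_le_one : ∀ j, e j ≤ 1 := fun j => by
    have := hm_nonneg j; have := hle1 j; simp only [he_def]; linarith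
  have hesum : (∑' j : ℤ, e j) ≤ 2 := by
    rw [hreindex, hesplit]
    have : (∑' i : ℕ, e (j₀ + i)) = c j₀ := by
      rw [tsum_congr heval]; exact htel
    rw [this]
    have := he_le_one (j₀ - 1)
    have := hle1 j₀
    linarith
  linarith [hcm]

set_option maxHeartbeats 1000000 in
lemma shift_le {C : ℝ} (hC : 0 < C) {T : ℝ} (hT : 0 < T) (α β : ℝ) :
    (∑' j : ℤ, Real.exp (-C * (β + j * T) ^ 2)) ≤
      2 + ∑' k : ℤ, Real.exp (-C * (α + k * T) ^ 2) := by
  have hc : Summable (fun j : ℤ => Real.exp (-C * (β + j * T) ^ 2)) := summable_grid hC hT β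
  have hc1 : Summable (fun j : ℤ => Real.exp (-C * (β + ((j : ℝ) + 1) * T) ^ 2)) := by
    refine (summable_grid hC hT (β + T)).congr fun j => ?_
    congr 1; ring
  have hpos : ∀ j : ℤ, (0:ℝ) ≤ Real.exp (-C * (β + j * T) ^ 2) := fun j => (exp_pos _).le
  have hle1 : ∀ j : ℤ, Real.exp (-C * (β + j * T) ^ 2) ≤ 1 := fun j =>
    exp_le_one_iff.mpr (by nlinarith [sq_nonneg (β + (j:ℝ) * T)])
  set j₀ : ℤ := -⌊β / T⌋ with hj₀_def
  have hfl : (⌊β / T⌋ : ℝ) ≤ β / T := Int.floor_le _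
  have hfl2 : β / T < (⌊β / T⌋ : ℝ) + 1 := Int.lt_floor_add_one _
  have hfl' : (⌊β / T⌋ : ℝ) * T ≤ β := by
    have h := mul_le_mul_of_nonneg_right hfl hT.le
    rwa [div_mul_cancel₀ _ (ne_of_gt hT)] at h
  have hfl2' : β < ((⌊β / T⌋ : ℝ) + 1) * T := by
    have h := mul_lt_mul_of_pos_right hfl2 hT
    rwa [div_mul_cancel₀ _ (ne_of_gt hT)] at h
  have hj₀_pos : 0 ≤ β + (j₀ : ℝ) * T := by
    push_cast [hj₀_def]; nlinarith
  have hdec : ∀ j : ℤ, j₀ ≤ j → Real.exp (-C * (β + ((j:ℝ) + 1) * T) ^ 2)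
      ≤ Real.exp (-C * (β + (j:ℝ) * T) ^ 2) := by
    intro j hj
    have h0 : 0 ≤ β + (j : ℝ) * T := by
      have : (j₀ : ℝ) ≤ j := by exact_mod_cast hj
      nlinarith
    apply exp_le_exp.mpr
    nlinarith [mul_nonneg (mul_nonneg hC.le hT.le) (by linarith : (0:ℝ) ≤ 2*(β+(j:ℝ)*T)+T)]
  have hinc : ∀ j : ℤ, j ≤ j₀ - 2 → Real.exp (-C * (β + (j:ℝ) * T) ^ 2)
      ≤ Real.exp (-C * (β + ((j:ℝ) + 1) * T) ^ 2) := by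
    intro j hj
    have h2 : (j : ℝ) + 1 ≤ (j₀ : ℝ) - 1 := by
      have : (j : ℝ) ≤ (j₀ : ℝ) - 2 := by exact_mod_cast hj
      linarith
    have h1 : β + ((j:ℝ) + 1) * T ≤ 0 := by
      push_cast [hj₀_def] at h2 ⊢
      nlinarith
    apply exp_le_exp.mpr
    nlinarith [mul_nonneg (mul_nonneg hC.le hT.le) (by linarith : (0:ℝ) ≤ -(2*(β+((j:ℝ)+1)*T)) + T)]
  have hmain := tsum_min_ge (fun j : ℤ => Real.exp (-C * (β + j * T) ^ 2)) hc
    (by refine hc1.congr fun j => ?_; push_cast; ring_nf)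
    hpos hle1 j₀
    (by intro j hj; have := hdec j hj; push_cast at this ⊢; convert this using 3 <;> ring)
    (by intro j hj; have := hinc j hj; push_cast at this ⊢; convert this using 3 <;> ring)
  have stepA : (∑' j : ℤ, min (Real.exp (-C * (β + j * T) ^ 2))
        (Real.exp (-C * (β + ((j + 1 : ℤ)) * T) ^ 2)))
      ≤ ∑' k : ℤ, Real.exp (-C * (α + k * T) ^ 2) := by
    set m : ℤ → ℝ := fun j => min (Real.exp (-C * (β + j * T) ^ 2))
        (Real.exp (-C * (β + ((j + 1 : ℤ)) * T) ^ 2)) with hm_def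
    have hm : Summable m := Summable.of_nonneg_of_le
      (fun j => le_min (exp_pos _).le (exp_pos _).le) (fun j => min_le_left _ _) hc
    set D : ℤ := ⌊(α - β) / T⌋ with hD_def
    have hDle : (D : ℝ) * T ≤ α - β := by
      rw [← le_div_iff₀ hT]; exact Int.floor_le _
    have hDgt : α - β ≤ ((D : ℝ) + 1) * T := by
      rw [← div_le_iff₀ hT]; exact (Int.lt_floor_add_one _).le
    have key : ∀ k : ℤ, m (k + D) ≤ Real.exp (-C * (α + k * T) ^ 2) := by
      intro k
      have h1 : β + ((k + D : ℤ) : ℝ) * T ≤ α + k * T := by push_cast; nlinarith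
      have h2 : α + k * T ≤ β + ((k + D + 1 : ℤ) : ℝ) * T := by push_cast; nlinarith
      have h := gauss_min_le hC h1 h2
      simpa only [hm_def] using h
    have hmD : Summable fun k : ℤ => m (k + D) := (Equiv.addRight D).summable_iff.mpr hm
    calc (∑' j : ℤ, m j) = ∑' k : ℤ, m (k + D) := ((Equiv.addRight D).tsum_eq m).symm
      _ ≤ _ := Summable.tsum_le_tsum key hmD (summable_grid hC hT α)
  beta_reduce at hmain
  exact hmain.trans (add_le_add_right stepA 2)

lemma grid_lower {C : ℝ} (hC : 0 < C) {T : ℝ} (hT : 0 < T) (M : ℕ) :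
    (2 * (M:ℝ) + 1) * Real.exp (-C * ((M:ℝ) * T) ^ 2) ≤
      ∑' k : ℤ, Real.exp (-C * ((0:ℝ) + k * T) ^ 2) := by
  have hsum := summable_grid hC hT 0
  refine le_trans ?_ (Summable.sum_le_tsum (Finset.Icc (-(M:ℤ)) M) (fun k _ => (exp_pos _).le) hsum)
  have hcard : ((Finset.Icc (-(M:ℤ)) M).card : ℝ) = 2 * (M:ℝ) + 1 := by
    rw [Int.card_Icc]
    have h2 : ((M:ℤ) + 1 - -(M:ℤ)).toNat = 2 * M + 1 := by omega
    rw [h2]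
    push_cast
    ring
  rw [← hcard]
  have := Finset.card_nsmul_le_sum (Finset.Icc (-(M:ℤ)) M)
    (fun k : ℤ => Real.exp (-C * ((0:ℝ) + k * T) ^ 2)) (Real.exp (-C * ((M:ℝ) * T) ^ 2)) ?_
  · rwa [nsmul_eq_mul] at this
  · intro k hk
    simp only [Finset.mem_Icc] at hk
    apply exp_le_exp.mpr
    have h1 : -(M:ℝ) ≤ (k:ℝ) := by exact_mod_cast hk.1
    have h2 : (k:ℝ) ≤ (M:ℝ) := by exact_mod_cast hk.2
    nlinarith [mul_nonneg (mul_nonneg hC.le (mul_pos hT hT).le)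
      (mul_nonneg (sub_nonneg.2 h2) (by linarith : (0:ℝ) ≤ (M:ℝ) + k))]

def modEquiv (t : ℕ) (ht : 0 < t) : Fin t × ℤ ≃ ℤ where
  toFun p := p.2 * t + (p.1 : ℤ)
  invFun x := (⟨(x % t).toNat, by
      have h1 : (0:ℤ) < t := by exact_mod_cast ht
      have := Int.emod_nonneg x (by omega : (t:ℤ) ≠ 0)
      have := Int.emod_lt_of_pos x h1
      omega⟩, x / t)
  left_inv p := by
    obtain ⟨i, k⟩ := p
    have h1 : (0:ℤ) < t := by exact_mod_cast ht
    have hi1 : (0:ℤ) ≤ (i:ℤ) := by positivity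
    have hi2 : (i:ℤ) < t := by exact_mod_cast i.isLt
    have hmod : (k * t + (i:ℤ)) % t = i := by
      rw [add_comm, Int.add_mul_emod_self_right]
      exact Int.emod_eq_of_lt hi1 hi2
    have hdiv : (k * t + (i:ℤ)) / t = k := by
      rw [add_comm, Int.add_mul_ediv_right _ _ (by omega : (t:ℤ) ≠ 0),
        Int.ediv_eq_zero_of_lt hi1 hi2, zero_add]
    ext
    · simp [hmod]
    · simp [hdiv]
  right_inv x := by
    have h1 : (0:ℤ) < t := by exact_mod_cast ht
    have := Int.emod_nonneg x (by omega : (t:ℤ) ≠ 0)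
    simp only []
    rw [Int.toNat_of_nonneg this]
    rw [Int.ediv_mul_add_emod]

lemma modEquiv_apply (t : ℕ) (ht : 0 < t) (p : Fin t × ℤ) :
    modEquiv t ht p = p.2 * t + (p.1 : ℤ) := rfl

end Stmt6Aux

set_option maxHeartbeats 4000000 in
/-- Center finding: for positive integers `n, t` and real `r ≥ 30·t·n·log n`, measuring
the residue mod `t` of the complex Gaussian state `|φ_c⟩ = Σ_{x∈ℤ} ρ_r(x) e^{-πix²/t}|x+c⟩`
in the basis `{|ψ_d⟩}` yields `d = c mod t` with probability
`Σ_{k∈ℤ}(Σ_{y∈ℤ_t} ρ_r(kt+y-c))² / (t·Σ_{x∈ℤ} ρ_r(x)²) ≥ 1 - 1/n`. -/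
theorem stmt_6 (n t : ℕ) (hn : 0 < n) (ht : 0 < t) (r : ℝ) (hr : 0 < r)
    (hrt : 30 * (t : ℝ) * (n : ℝ) * Real.log n ≤ r) (c : ℤ) :
    1 - 1 / (n : ℝ) ≤
      (∑' k : ℤ, (∑ y ∈ Finset.range t, rhoG r ((k : ℝ) * t + (y : ℝ) - (c : ℝ))) ^ 2) /
        ((t : ℝ) * ∑' x : ℤ, rhoG r (x : ℝ) ^ 2) := by
  have hrpos := hr
  -- basic positivity
  have ht0 : (0:ℝ) < t := by exact_mod_cast ht
  have hn0 : (0:ℝ) < n := by exact_mod_cast hn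
  rcases Nat.lt_or_ge n 2 with hn1 | hn2
  · -- n = 1
    interval_cases n
    simp only [Nat.cast_one]
    norm_num
    apply div_nonneg
    · exact tsum_nonneg fun k => sq_nonneg _
    · exact mul_nonneg ht0.le (tsum_nonneg fun x => sq_nonneg _)
  -- n ≥ 2 case
  have hn2' : (2:ℝ) ≤ n := by exact_mod_cast hn2
  have ht1 : (1:ℝ) ≤ t := by exact_mod_cast ht
  have hlog2 : (0.6931471803:ℝ) < Real.log 2 := Real.log_two_gt_d9
  have hlogn : Real.log 2 ≤ Real.log n := Real.log_le_log (by norm_num) hn2'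
  have hr' : 20.7 * (t:ℝ) * n ≤ r := by nlinarith
  have hrt40 : 40 * (t:ℝ) ≤ r := by nlinarith
  set C₂ : ℝ := π / (2 * r ^ 2) with hC₂_def
  have hC₂ : 0 < C₂ := by positivity
  set T : ℝ := 2 * (t:ℝ) with hT_def
  have hT : 0 < T := by positivity
  set S0 : ℝ := ∑' k : ℤ, Real.exp (-C₂ * ((0:ℝ) + k * T) ^ 2) with hS0_def
  have hπlt : π < 3.15 := pi_lt_d2
  have hπgt : 3 < π := pi_gt_three
  -- S0 lower bound
  have hS0 : 5.9 * (n:ℝ) ≤ S0 := by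
    set M : ℕ := ⌊r / (4 * t)⌋₊ with hM_def
    have hr4t : 0 ≤ r / (4 * t) := by positivity
    have hM1 : (M:ℝ) ≤ r / (4 * t) := Nat.floor_le hr4t
    have hM2 : r / (4 * t) - 1 < (M:ℝ) := Nat.sub_one_lt_floor _
    have hM1' : (M:ℝ) * (4 * t) ≤ r := by
      have := mul_le_mul_of_nonneg_right hM1 (by positivity : (0:ℝ) ≤ 4 * t)
      rwa [div_mul_cancel₀ _ (by positivity : (4:ℝ) * t ≠ 0)] at this
    have hM2' : r - 4 * t < (M:ℝ) * (4 * t) := by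
      have := mul_lt_mul_of_pos_right hM2 (by positivity : (0:ℝ) < 4 * t)
      rw [sub_mul, div_mul_cancel₀ _ (by positivity : (4:ℝ) * t ≠ 0), one_mul] at this
      linarith
    have hexp : -(π/8) ≤ -C₂ * ((M:ℝ) * T) ^ 2 := by
      have hMT : (M:ℝ) * T ≤ r / 2 := by
        rw [hT_def]; nlinarith
      have hMT0 : 0 ≤ (M:ℝ) * T := by positivity
      rw [hC₂_def]
      rw [neg_mul, neg_le_neg_iff, div_mul_eq_mul_div, div_le_div_iff₀ (by positivity) (by norm_num)]
      have hsq : ((M:ℝ) * T) * ((M:ℝ) * T) ≤ (r/2) * (r/2) :=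
        mul_le_mul hMT hMT hMT0 (by positivity)
      nlinarith [mul_le_mul_of_nonneg_left hsq pi_pos.le]
    have hexp2 : (1:ℝ) - 3.15/8 ≤ Real.exp (-C₂ * ((M:ℝ) * T) ^ 2) := by
      have h1 := add_one_le_exp (-C₂ * ((M:ℝ) * T) ^ 2)
      nlinarith
    have hgle := grid_lower hC₂ hT M
    have hMn : 10.35 * (n:ℝ) - 1 < 2 * (M:ℝ) + 1 := by
      have h4 : (20.7 * n - 4) * t < (M:ℝ) * 4 * t := by nlinarith
      have := lt_of_mul_lt_mul_right h4 ht0.le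
      linarith
    have hcount : 0 ≤ 2 * (M:ℝ) + 1 := by positivity
    have hval : (0:ℝ) ≤ Real.exp (-C₂ * ((M:ℝ) * T) ^ 2) := (exp_pos _).le
    nlinarith [mul_le_mul hMn.le hexp2 (by norm_num) hcount]
  have hS0pos : (0:ℝ) < S0 := by nlinarith
  -- the smoothing factor E
  set E : ℝ := Real.exp (-C₂ * (t:ℝ) ^ 2) with hE_def
  have hEpos : 0 < E := exp_pos _
  have hE1 : E ≤ 1 := exp_le_one_iff.mpr (by nlinarith [sq_nonneg (t:ℝ)])
  have hE2 : (1 - E) * (200 * (n:ℝ) ^ 2) ≤ 1 := by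
    have h1 := add_one_le_exp (-C₂ * (t:ℝ) ^ 2)
    have h2 : 1 - E ≤ C₂ * (t:ℝ) ^ 2 := by rw [hE_def]; nlinarith
    have h3 : C₂ * (t:ℝ) ^ 2 * (200 * (n:ℝ) ^ 2) ≤ 1 := by
      rw [hC₂_def, div_mul_eq_mul_div, div_mul_eq_mul_div, div_le_one (by positivity)]
      nlinarith [mul_self_le_mul_self (by positivity : (0:ℝ) ≤ 20.7 * t * n) hr',
        mul_pos (mul_pos ht0 hn0) (mul_pos ht0 hn0)]
    nlinarith [sq_nonneg (n:ℝ), sq_nonneg (t:ℝ)]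
  -- pointwise Gaussian product identity
  have ha : ∀ x : ℝ, rhoG r x = Real.exp (-(π/r^2) * x^2) := by
    intro x
    rw [rhoG_def]
    congr 1
    ring
  have hprod : ∀ u v : ℝ, Real.exp (-(π/r^2) * u^2) * Real.exp (-(π/r^2) * v^2)
      = Real.exp (-C₂ * (u+v)^2) * Real.exp (-C₂ * (u-v)^2) := by
    intro u v
    rw [← exp_add, ← exp_add]
    congr 1
    rw [hC₂_def]
    field_simp
    ring
  -- numerator
  set P := Finset.range t ×ˢ Finset.range t with hP_def
  set F : (ℕ × ℕ) → ℤ → ℝ :=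
    fun p k => rhoG r ((k:ℝ) * t + p.1 - c) * rhoG r ((k:ℝ) * t + p.2 - c) with hF_def
  have hFeq : ∀ p : ℕ × ℕ, ∀ k : ℤ, F p k =
      Real.exp (-C₂ * (((p.1:ℝ) + p.2 - 2*(c:ℝ)) + (k:ℝ) * T) ^ 2) *
        Real.exp (-C₂ * ((p.1:ℝ) - (p.2:ℝ))^2) := by
    intro p k
    simp only [hF_def]
    rw [ha, ha, hprod]
    congr 2 <;> push_cast <;> ring
  have hFsum : ∀ p : ℕ × ℕ, Summable (F p) := by
    intro p
    exact ((summable_grid hC₂ hT ((p.1:ℝ) + p.2 - 2*(c:ℝ))).mul_right _).congr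
      fun k => (hFeq p k).symm
  have hNsplit : (∑' k : ℤ, (∑ y ∈ Finset.range t, rhoG r ((k : ℝ) * t + (y:ℝ) - (c:ℝ))) ^ 2)
      = ∑ p ∈ P, ∑' k : ℤ, F p k := by
    rw [← Summable.tsum_finsetSum (fun p _ => hFsum p)]
    refine tsum_congr fun k => ?_
    rw [sq, Finset.sum_mul_sum, hP_def, ← Finset.sum_product']
  have hS02 : (0:ℝ) ≤ S0 - 2 := by nlinarith
  have hpair : ∀ p ∈ P, E * (S0 - 2) ≤ ∑' k : ℤ, F p k := by
    intro p hp
    simp only [hP_def, Finset.mem_product, Finset.mem_range] at hp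
    have h1 : ∑' k : ℤ, F p k =
        (∑' k : ℤ, Real.exp (-C₂ * (((p.1:ℝ) + p.2 - 2*(c:ℝ)) + (k:ℝ) * T) ^ 2)) *
          Real.exp (-C₂ * ((p.1:ℝ) - (p.2:ℝ))^2) := by
      rw [tsum_congr (hFeq p)]
      exact tsum_mul_right
    rw [h1]
    have h2 : S0 - 2 ≤ ∑' k : ℤ, Real.exp (-C₂ * (((p.1:ℝ) + p.2 - 2*(c:ℝ)) + (k:ℝ) * T) ^ 2) := by
      have h := shift_le hC₂ hT ((p.1:ℝ) + p.2 - 2*(c:ℝ)) 0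
      rw [hS0_def]
      linarith [h]
    have h3 : E ≤ Real.exp (-C₂ * ((p.1:ℝ) - (p.2:ℝ))^2) := by
      rw [hE_def]
      apply exp_le_exp.mpr
      have hy1 : (p.1:ℝ) < t := by exact_mod_cast hp.1
      have hy2 : (p.2:ℝ) < t := by exact_mod_cast hp.2
      have hy1' : (0:ℝ) ≤ (p.1:ℝ) := Nat.cast_nonneg _
      have hy2' : (0:ℝ) ≤ (p.2:ℝ) := Nat.cast_nonneg _
      nlinarith [mul_nonneg hC₂.le (mul_nonneg (by linarith : (0:ℝ) ≤ (t:ℝ) - (p.1:ℝ) + p.2)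
        (by linarith : (0:ℝ) ≤ (t:ℝ) + (p.1:ℝ) - p.2))]
    calc E * (S0 - 2) = (S0 - 2) * E := mul_comm _ _
      _ ≤ _ := mul_le_mul h2 h3 hEpos.le (tsum_nonneg fun k => (exp_pos _).le)
  have hNlow : (t:ℝ)^2 * (E * (S0 - 2)) ≤ ∑ p ∈ P, ∑' k : ℤ, F p k := by
    have hsum := Finset.sum_le_sum hpair
    rw [Finset.sum_const] at hsum
    have hcard : P.card = t * t := by rw [hP_def, Finset.card_product, Finset.card_range]
    rw [hcard, nsmul_eq_mul] at hsum
    have hcast : ((t * t : ℕ) : ℝ) = (t:ℝ)^2 := by push_cast; ring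
    rw [hcast] at hsum
    exact hsum
  -- denominator
  have hbsum : Summable (fun x : ℤ => Real.exp (-C₂ * (2*(x:ℝ))^2)) :=
    (summable_grid hC₂ (by norm_num : (0:ℝ) < 2) 0).congr fun x => by congr 1; ring
  have hDeq : ∀ x : ℤ, rhoG r ((x:ℤ):ℝ)^2 = Real.exp (-C₂ * (2*(x:ℝ))^2) := by
    intro x
    rw [ha, sq, ← exp_add]
    congr 1
    rw [hC₂_def]
    field_simp
    ring
  have hDsum : Summable (fun x : ℤ => rhoG r ((x:ℤ):ℝ)^2) := hbsum.congr fun x => (hDeq x).symm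
  have hDsum1 : (1:ℝ) ≤ ∑' x : ℤ, rhoG r ((x:ℤ):ℝ)^2 := by
    have h0 : rhoG r (((0:ℤ):ℝ))^2 = 1 := by
      rw [ha]
      norm_num
    calc (1:ℝ) = rhoG r (((0:ℤ):ℝ))^2 := h0.symm
      _ ≤ _ := Summable.le_tsum hDsum 0 fun j _ => sq_nonneg _
  have hDub : (∑' x : ℤ, rhoG r ((x:ℤ):ℝ)^2) ≤ (t:ℝ) * (S0 + 2) := by
    rw [tsum_congr hDeq]
    have he1 : (∑' x : ℤ, Real.exp (-C₂ * (2*(x:ℝ))^2))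
        = ∑' p : Fin t × ℤ, Real.exp (-C₂ * (2*((modEquiv t ht p : ℤ):ℝ))^2) :=
      ((modEquiv t ht).tsum_eq (fun x : ℤ => Real.exp (-C₂ * (2*(x:ℝ))^2))).symm
    have hsum2 : Summable fun p : Fin t × ℤ => Real.exp (-C₂ * (2*((modEquiv t ht p : ℤ):ℝ))^2) :=
      (modEquiv t ht).summable_iff.mpr hbsum
    have hslice : ∀ i : Fin t,
        Summable fun k : ℤ => Real.exp (-C₂ * (2*((modEquiv t ht (i, k) : ℤ):ℝ))^2) := by
      intro i
      refine (summable_grid hC₂ hT (2*((i:ℕ):ℝ))).congr fun k => ?_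
      rw [modEquiv_apply]
      congr 1
      push_cast
      ring
    rw [he1, Summable.tsum_prod' hsum2 hslice, tsum_fintype]
    have hib : ∀ i : Fin t,
        (∑' k : ℤ, Real.exp (-C₂ * (2*((modEquiv t ht (i, k) : ℤ):ℝ))^2)) ≤ S0 + 2 := by
      intro i
      have heq : (∑' k : ℤ, Real.exp (-C₂ * (2*((modEquiv t ht (i, k) : ℤ):ℝ))^2))
          = ∑' k : ℤ, Real.exp (-C₂ * ((2*((i:ℕ):ℝ)) + (k:ℝ) * T)^2) :=
        tsum_congr fun k => by rw [modEquiv_apply]; congr 1; push_cast; ring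
      rw [heq]
      have h := shift_le hC₂ hT 0 (2*((i:ℕ):ℝ))
      rw [hS0_def]
      linarith [h]
    calc (∑ i : Fin t, ∑' k : ℤ, Real.exp (-C₂ * (2*((modEquiv t ht (i, k) : ℤ):ℝ))^2))
        ≤ ∑ _i : Fin t, (S0 + 2) := Finset.sum_le_sum (fun i _ => hib i)
      _ = (t:ℝ) * (S0+2) := by
          rw [Finset.sum_const, Finset.card_univ, Fintype.card_fin, nsmul_eq_mul]
  -- final assembly
  have hDpos : (0:ℝ) < (t:ℝ) * ∑' x : ℤ, rhoG r ((x:ℤ):ℝ)^2 :=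
    mul_pos ht0 (lt_of_lt_of_le one_pos hDsum1)
  rw [le_div_iff₀ hDpos]
  have h1n : (0:ℝ) ≤ 1 - 1/(n:ℝ) := by
    rw [sub_nonneg]
    rw [div_le_one hn0]
    linarith
  have hcore : (1 - 1/(n:ℝ)) * (S0+2) ≤ E * (S0-2) := by
    have h1n' : 1 - 1/(n:ℝ) = ((n:ℝ)-1)/n := by field_simp
    rw [h1n', div_mul_eq_mul_div, div_le_iff₀ hn0]
    have q0 : (0:ℝ) ≤ (1 - E) * S0 := mul_nonneg (by linarith) hS0pos.le
    have q1 : (1-E) * (200*(n:ℝ)^2) * S0 ≤ 1 * S0 := mul_le_mul_of_nonneg_right hE2 hS0pos.le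
    have q22 : (0:ℝ) ≤ (200*(n:ℝ)*((n:ℝ)-2)) * ((1-E)*S0) :=
      mul_nonneg (by nlinarith) q0
    have q2 : 400 * (n:ℝ) * ((1-E) * S0) ≤ 200*(n:ℝ)^2 * ((1-E) * S0) := by nlinarith [q22]
    have q3 : 400 * (n:ℝ) * ((1-E) * S0) ≤ S0 := by nlinarith [q1, q2]
    nlinarith [q3, hS0, hn2', mul_le_mul_of_nonneg_left hE1 hn0.le, hS0pos]
  calc (1 - 1/(n:ℝ)) * ((t:ℝ) * ∑' x : ℤ, rhoG r ((x:ℤ):ℝ)^2)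
      ≤ (1 - 1/(n:ℝ)) * ((t:ℝ) * ((t:ℝ) * (S0+2))) := by
        apply mul_le_mul_of_nonneg_left _ h1n
        exact mul_le_mul_of_nonneg_left hDub ht0.le
    _ ≤ (t:ℝ)^2 * (E * (S0 - 2)) := by
        nlinarith [mul_le_mul_of_nonneg_left hcore (sq_nonneg (t:ℝ))]
    _ ≤ ∑ p ∈ P, ∑' k : ℤ, F p k := hNlow
    _ = _ := hNsplit.symm
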